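/- Forests f₁, f₂ over Σ are equal modulo the commutativity identities for all c ∈ 𝓒 if and only if nf_𝓒(f₁) = nf_𝓒(f₂). -/

import Mathlib

inductive RTree (σ : Type) : Type
  | node : σ → List (RTree σ) → RTree σ

/-- The alphabet `Σ ∪ {(, )}`: `⊥` is `'('`, `(⊥ : WithBot σ)` is `')'` and
`letter a` is the letter `a ∈ Σ`.  If `σ` is linearly ordered, this alphabet
carries the induced linear order. -/
abbrev TSym (σ : Type) : Type := WithBot (WithBot σ)

def lparen {σ : Type} : TSym σ := ⊥
def rparen {σ : Type} : TSym σ := ((⊥ : WithBot σ) : TSym σ)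
def letter {σ : Type} (a : σ) : TSym σ := ((a : WithBot σ) : TSym σ)

mutual
/-- The term representation of a tree as a string over `Σ ∪ {(, )}`:
`rep(a(f)) = a ( rep(f) )`. -/
def repT {σ : Type} : RTree σ → List (TSym σ)
  | .node a l => letter a :: lparen :: (repF l ++ [rparen])
/-- The term representation of a forest: `rep(t₁ ⋯ tₙ) = rep(t₁) ⋯ rep(tₙ)`. -/
def repF {σ : Type} : List (RTree σ) → List (TSym σ)
  | [] => []
  | t :: ts => repT t ++ repF ts
end

/-- The length-lexicographic order on strings induced by an order `r`. -/
def llex {α : Type} (r : α → α → Prop) (x y : List α) : Prop :=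
  x.length < y.length ∨ (x.length = y.length ∧ List.Lex r x y)

instance {α : Type} [DecidableEq α] (r : α → α → Prop) [DecidableRel r] :
    DecidableRel (llex r) := fun _ _ => by unfold llex; infer_instance

/-- The Boolean comparison used for sorting sibling trees: `s ≤ t` iff
`rep(t)` is not length-lexicographically smaller than `rep(s)`. -/
def leTree {σ : Type} [LinearOrder σ] (s t : RTree σ) : Bool :=
  decide (¬ llex (· < ·) (repT t) (repT s))

/-- Sort a list of sibling trees by the length-lexicographic order of their
term representations. -/
def sortTrees {σ : Type} [LinearOrder σ] (l : List (RTree σ)) : List (RTree σ) :=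
  l.mergeSort leTree

mutual
/-- The commutative normal form: below a `𝓒`-labelled node, the children are
sorted with respect to `<llex` of their term representations. -/
def nfCT {σ : Type} [LinearOrder σ] (C : Set σ) [DecidablePred (· ∈ C)] :
    RTree σ → RTree σ
  | .node a l => .node a (if a ∈ C then sortTrees (nfCF C l) else nfCF C l)
/-- The commutative normal form of a forest. -/
def nfCF {σ : Type} [LinearOrder σ] (C : Set σ) [DecidablePred (· ∈ C)] :
    List (RTree σ) → List (RTree σ)
  | [] => []
  | t :: ts => nfCT C t :: nfCF C ts
end

/-- Equality of forests modulo the commutativity identities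
`c(t₁ ⋯ tₙ) = c(t_{σ(1)} ⋯ t_{σ(n)})` for `c ∈ 𝓒`: the smallest congruence
containing all instances of these identities. -/
inductive EqC {σ : Type} (C : Set σ) : List (RTree σ) → List (RTree σ) → Prop
  | comm {c : σ} {l l' : List (RTree σ)} :
      c ∈ C → l.Perm l' → EqC C [.node c l] [.node c l']
  | refl (f : List (RTree σ)) : EqC C f f
  | symm {f g : List (RTree σ)} : EqC C f g → EqC C g f
  | trans {f g h : List (RTree σ)} : EqC C f g → EqC C g h → EqC C f h
  | congrNode {a : σ} {f g : List (RTree σ)} :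
      EqC C f g → EqC C [.node a f] [.node a g]
  | congrConcat {f f' g g' : List (RTree σ)} :
      EqC C f f' → EqC C g g' → EqC C (f ++ g) (f' ++ g')

section Aux

variable {σ : Type}

theorem letter_ne_rparen (a : σ) : letter a ≠ rparen := by
  simp [letter, rparen]

/-- Key parsing lemma: `repF` followed by a closing parenthesis sentinel is
uniquely decodable. -/
theorem repF_key : ∀ (f g : List (RTree σ)) (x y : List (TSym σ)),
    repF f ++ rparen :: x = repF g ++ rparen :: y → f = g ∧ x = y
  | [], [], x, y, h => by simpa [repF] using h
  | [], .node b m :: us, x, y, h => by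
    exfalso
    simp only [repF, repT, List.nil_append, List.cons_append, List.append_assoc,
      List.cons.injEq] at h
    exact letter_ne_rparen b h.1.symm
  | .node a l :: ts, [], x, y, h => by
    exfalso
    simp only [repF, repT, List.nil_append, List.cons_append, List.append_assoc,
      List.cons.injEq] at h
    exact letter_ne_rparen a h.1
  | .node a l :: ts, .node b m :: us, x, y, h => by
    simp only [repF, repT, List.cons_append, List.append_assoc, List.singleton_append,
      List.cons.injEq] at h
    obtain ⟨hab, -, h⟩ := h
    have hab' : a = b := by
      simpa [letter] using hab
    obtain ⟨hl, h2⟩ := repF_key l m (repF ts ++ rparen :: x) (repF us ++ rparen :: y) h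
    obtain ⟨hts, hxy⟩ := repF_key ts us x y h2
    exact ⟨by rw [hab', hl, hts], hxy⟩

theorem repF_inj {f g : List (RTree σ)} (h : repF f = repF g) : f = g := by
  have := repF_key f g [] [] (by rw [h])
  exact this.1

theorem repT_inj {s t : RTree σ} (h : repT s = repT t) : s = t := by
  have : repF [s] = repF [t] := by simp [repF, h]
  simpa using repF_inj this

section Ordered

variable [LinearOrder σ]

theorem llex_trichotomy (x y : List (TSym σ)) (h : x ≠ y) :
    llex (· < ·) x y ∨ llex (· < ·) y x := by
  rcases lt_trichotomy x.length y.length with hl | hl | hl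
  · exact Or.inl (Or.inl hl)
  · rcases trichotomous_of (List.Lex (· < · : TSym σ → TSym σ → Prop)) x y with hx | hx | hx
    · exact Or.inl (Or.inr ⟨hl, hx⟩)
    · exact absurd hx h
    · exact Or.inr (Or.inr ⟨hl.symm, hx⟩)
  · exact Or.inr (Or.inl hl)

theorem llex_irrefl (x : List (TSym σ)) : ¬ llex (· < ·) x x := by
  rintro (h | ⟨-, h⟩)
  · omega
  · exact irrefl_of (List.Lex (· < · : TSym σ → TSym σ → Prop)) x h

theorem llex_trans {x y z : List (TSym σ)}
    (h1 : llex (· < ·) x y) (h2 : llex (· < ·) y z) : llex (· < ·) x z := by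
  rcases h1 with h1 | ⟨hl1, h1⟩ <;> rcases h2 with h2 | ⟨hl2, h2⟩
  · exact Or.inl (h1.trans h2)
  · exact Or.inl (hl2 ▸ h1)
  · exact Or.inl (hl1 ▸ h2)
  · exact Or.inr ⟨hl1.trans hl2, List.lex_trans (fun h₁ h₂ => lt_trans h₁ h₂) h1 h2⟩

theorem leTree_total (s t : RTree σ) : (leTree s t || leTree t s) = true := by
  simp only [leTree, Bool.or_eq_true, decide_eq_true_eq]
  by_contra h
  push_neg at h
  exact llex_irrefl _ (llex_trans h.1 h.2)

theorem leTree_trans (s t u : RTree σ) (h1 : leTree s t) (h2 : leTree t u) :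
    leTree s u = true := by
  simp only [leTree, decide_eq_true_eq] at *
  intro h
  by_cases he : repT s = repT t
  · exact h2 (he ▸ h)
  rcases llex_trichotomy (repT s) (repT t) he with hst | hst
  · exact h2 (llex_trans h hst)
  · exact h1 hst

theorem leTree_antisymm (s t : RTree σ) (h1 : leTree s t = true)
    (h2 : leTree t s = true) : s = t := by
  simp only [leTree, decide_eq_true_eq] at h1 h2
  by_contra hne
  rcases llex_trichotomy (repT s) (repT t) (fun he => hne (repT_inj he)) with h | h
  · exact h2 h
  · exact h1 h

theorem sortTrees_perm (l : List (RTree σ)) : (sortTrees l).Perm l :=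
  List.mergeSort_perm l leTree

theorem sortTrees_eq_of_perm {l l' : List (RTree σ)} (h : l.Perm l') :
    sortTrees l = sortTrees l' := by
  haveI : IsAntisymm (RTree σ) (fun s t => leTree s t = true) :=
    ⟨fun _ _ h1 h2 => leTree_antisymm _ _ h1 h2⟩
  refine List.Perm.eq_of_pairwise'
    (r := fun s t => leTree s t = true) ?_ ?_
    (((sortTrees_perm l).trans h).trans (sortTrees_perm l').symm)
  · exact List.pairwise_mergeSort leTree_trans leTree_total l
  · exact List.pairwise_mergeSort leTree_trans leTree_total l'

variable (C : Set σ) [DecidablePred (· ∈ C)]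

theorem nfCF_eq_map : ∀ l : List (RTree σ), nfCF C l = l.map (nfCT C)
  | [] => rfl
  | t :: ts => by rw [nfCF, nfCF_eq_map ts, List.map_cons]

theorem nfCF_append (f g : List (RTree σ)) :
    nfCF C (f ++ g) = nfCF C f ++ nfCF C g := by
  simp [nfCF_eq_map]

theorem nfCF_perm {f g : List (RTree σ)} (h : f.Perm g) :
    (nfCF C f).Perm (nfCF C g) := by
  rw [nfCF_eq_map, nfCF_eq_map]
  exact h.map _

mutual
theorem eqC_nfT : ∀ t : RTree σ, EqC C [t] [nfCT C t]
  | .node a l => by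
    rw [nfCT]
    by_cases h : a ∈ C
    · rw [if_pos h]
      exact (EqC.congrNode (eqC_nfF l)).trans
        (EqC.comm h (sortTrees_perm (nfCF C l)).symm)
    · rw [if_neg h]
      exact EqC.congrNode (eqC_nfF l)
theorem eqC_nfF : ∀ f : List (RTree σ), EqC C f (nfCF C f)
  | [] => EqC.refl []
  | t :: ts => by
    have : EqC C ([t] ++ ts) ([nfCT C t] ++ nfCF C ts) :=
      EqC.congrConcat (eqC_nfT t) (eqC_nfF ts)
    simpa [nfCF] using this
end

end Ordered

end Aux

/-- Two forests are equal modulo the commutativity identities for all `c ∈ 𝓒`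
iff they have the same commutative normal form. -/
theorem eqC_iff_nfC_eq {σ : Type} [LinearOrder σ] (C : Set σ)
    [DecidablePred (· ∈ C)] (f₁ f₂ : List (RTree σ)) :
    EqC C f₁ f₂ ↔ nfCF C f₁ = nfCF C f₂ := by
  constructor
  · intro h
    induction h with
    | comm hc hperm =>
      simp only [nfCF, nfCT, if_pos hc]
      rw [sortTrees_eq_of_perm (nfCF_perm C hperm)]
    | refl f => rfl
    | symm _ ih => exact ih.symm
    | trans _ _ ih1 ih2 => exact ih1.trans ih2
    | congrNode _ ih => simp only [nfCF, nfCT]; rw [ih]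
    | congrConcat _ _ ih1 ih2 => rw [nfCF_append, nfCF_append, ih1, ih2]
  · intro h
    exact ((eqC_nfF C f₁).trans (h ▸ EqC.refl _)).trans (eqC_nfF C f₂).symm
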